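/- Let γ be the standard Gaussian measure on ℝ with CDF Φ, Φ⁻¹ : (0,1) → ℝ its inverse, d ≥ 1, μ the d-fold product of standard Gaussian measures on ℝ^d, and λ Lebesgue measure on (0,1). Let f : ℝ × ℝ^d → ℝ and Γ : ℝ^d → ℝ be measurable, and define g(z,y) = max(f(z,y),0)·1{z < Γ(y)} and ĝ(u,y) = Φ(Γ(y))·max( f( Φ⁻¹( u·Φ(Γ(y)) ), y ), 0 ). If g is square-integrable with respect to γ ⊗ μ, then ĝ is square-integrable with respect to λ ⊗ μ and Var_{λ⊗μ}[ĝ] ≤ Var_{γ⊗μ}[g], where Var denotes the variance (integral of the square minus the square of the integral). (The conditional sampling estimator never has larger variance than the unconditional one.) -/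

import Mathlib

open MeasureTheory ProbabilityTheory
open scoped ENNReal

lemma gauss_Ioc_pos {a b : ℝ} (h : a < b) : 0 < gaussianReal 0 1 (Set.Ioc a b) := by
  rw [gaussianReal_apply 0 one_ne_zero]
  rw [lintegral_pos_iff_support (measurable_gaussianPDF 0 1)]
  have hsupp : Function.support (gaussianPDF 0 1) = Set.univ := by
    ext x
    simp only [Function.mem_support, Set.mem_univ, iff_true, gaussianPDF]
    exact (ENNReal.ofReal_pos.mpr (gaussianPDFReal_pos 0 1 x one_ne_zero)).ne'
  rw [hsupp, Measure.restrict_apply MeasurableSet.univ, Set.univ_inter, Real.volume_Ioc]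
  exact ENNReal.ofReal_pos.mpr (by linarith)

lemma gauss_singleton (b : ℝ) : gaussianReal 0 1 {b} = 0 :=
  gaussianReal_absolutelyContinuous 0 one_ne_zero (Real.volume_singleton)

lemma gauss_Iio_eq_Iic (b : ℝ) : gaussianReal 0 1 (Set.Iio b) = gaussianReal 0 1 (Set.Iic b) := by
  rw [← Set.Iio_union_right, measure_union (by simp) (measurableSet_singleton b),
    gauss_singleton, add_zero]

section Phi
variable {Φ : ℝ → ℝ} (hΦ : ∀ x : ℝ, Φ x = ((gaussianReal 0 1) (Set.Iic x)).toReal)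
include hΦ

lemma Phi_strictMono : StrictMono Φ := by
  intro a b hab
  rw [hΦ a, hΦ b]
  have hsplit : gaussianReal 0 1 (Set.Iic b)
      = gaussianReal 0 1 (Set.Iic a) + gaussianReal 0 1 (Set.Ioc a b) := by
    rw [← measure_union (Set.Iic_disjoint_Ioc le_rfl) measurableSet_Ioc,
      Set.Iic_union_Ioc_eq_Iic hab.le]
  have hfin : gaussianReal 0 1 (Set.Iic b) ≠ ⊤ := measure_ne_top _ _
  apply ENNReal.toReal_strict_mono hfin
  rw [hsplit]
  exact ENNReal.lt_add_right (measure_ne_top _ _) (gauss_Ioc_pos hab).ne'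

lemma Phi_pos (x : ℝ) : 0 < Φ x := by
  rw [hΦ x]
  have hpos := gauss_Ioc_pos (show x - 1 < x by linarith)
  have hle : gaussianReal 0 1 (Set.Ioc (x-1) x) ≤ gaussianReal 0 1 (Set.Iic x) :=
    measure_mono Set.Ioc_subset_Iic_self
  exact ENNReal.toReal_pos (lt_of_lt_of_le hpos hle).ne' (measure_ne_top _ _)

lemma Phi_lt_one (x : ℝ) : Φ x < 1 := by
  rw [hΦ x]
  have hpos := gauss_Ioc_pos (show x < x + 1 by linarith)
  have hle : gaussianReal 0 1 (Set.Ioc x (x+1)) ≤ gaussianReal 0 1 (Set.Ioi x) :=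
    measure_mono Set.Ioc_subset_Ioi_self
  have hsplit : gaussianReal 0 1 (Set.Iic x) + gaussianReal 0 1 (Set.Ioi x) = 1 := by
    rw [← measure_union (Set.Iic_disjoint_Ioi le_rfl) measurableSet_Ioi,
      Set.Iic_union_Ioi, measure_univ]
  have hlt : gaussianReal 0 1 (Set.Iic x) < 1 := by
    rw [← hsplit]
    exact ENNReal.lt_add_right (measure_ne_top _ _) (lt_of_lt_of_le hpos hle).ne'
  have := ENNReal.toReal_strict_mono ENNReal.one_ne_top hlt
  simpa using this

lemma Phi_measurable : Measurable Φ :=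
  ((Phi_strictMono hΦ).monotone).measurable

lemma Phi_ofReal (x : ℝ) : ENNReal.ofReal (Φ x) = gaussianReal 0 1 (Set.Iic x) := by
  rw [hΦ x, ENNReal.ofReal_toReal (measure_ne_top _ _)]

end Phi

/-- Variance reduction of the conditional sampling estimator: if the up-&-out payoff
`g(z,y) = max(f(z,y),0)·1{z < Γ(y)}` is square-integrable w.r.t. the product of a
standard Gaussian on `ℝ` and the `d`-fold product of standard Gaussians on `ℝ^d`, then
the conditionally sampled payoff `ĝ(u,y) = Φ(Γ(y))·max(f(Φ⁻¹(u·Φ(Γ(y))), y), 0)` is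
square-integrable w.r.t. Lebesgue measure on `(0,1)` times the Gaussian product, and its
variance never exceeds that of `g`. -/
theorem conditional_sampling_variance_reduction
    (d : ℕ) (hd : 1 ≤ d)
    (Φ : ℝ → ℝ)
    (hΦ : ∀ x : ℝ, Φ x = ((gaussianReal 0 1) (Set.Iic x)).toReal)
    (Φinv : ℝ → ℝ)
    (hΦinv : ∀ p ∈ Set.Ioo (0 : ℝ) 1, Φ (Φinv p) = p)
    (f : ℝ × (Fin d → ℝ) → ℝ) (hf : Measurable f)
    (Γ : (Fin d → ℝ) → ℝ) (hΓ : Measurable Γ)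
    (μ : Measure (Fin d → ℝ))
    (hμ : μ = Measure.pi fun _ : Fin d => gaussianReal 0 1)
    (g ghat : ℝ × (Fin d → ℝ) → ℝ)
    (hg : ∀ p : ℝ × (Fin d → ℝ), g p = if p.1 < Γ p.2 then max (f p) 0 else 0)
    (hghat : ∀ p : ℝ × (Fin d → ℝ),
      ghat p = Φ (Γ p.2) * max (f (Φinv (p.1 * Φ (Γ p.2)), p.2)) 0)
    (hint2 : Integrable (fun p => (g p) ^ 2) ((gaussianReal 0 1).prod μ)) :
    Integrable (fun p => (ghat p) ^ 2) ((volume.restrict (Set.Ioo (0 : ℝ) 1)).prod μ) ∧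
    (∫ p, (ghat p) ^ 2 ∂((volume.restrict (Set.Ioo (0 : ℝ) 1)).prod μ))
        - (∫ p, ghat p ∂((volume.restrict (Set.Ioo (0 : ℝ) 1)).prod μ)) ^ 2
      ≤ (∫ p, (g p) ^ 2 ∂((gaussianReal 0 1).prod μ))
          - (∫ p, g p ∂((gaussianReal 0 1).prod μ)) ^ 2 := by
  subst hμ
  set μ : Measure (Fin d → ℝ) := Measure.pi fun _ : Fin d => gaussianReal 0 1 with hμ
  set ν : Measure ℝ := volume.restrict (Set.Ioo (0 : ℝ) 1) with hν
  have hνfin : IsFiniteMeasure ν := ⟨by rw [hν, Measure.restrict_apply_univ, Real.volume_Ioo]; simp⟩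
  haveI := hνfin
  have hΦmono := Phi_strictMono hΦ
  have hΦpos := Phi_pos hΦ
  have hΦlt1 := Phi_lt_one hΦ
  have hΦmeas := Phi_measurable hΦ
  have hcmem : ∀ y, Φ (Γ y) ∈ Set.Ioo (0:ℝ) 1 := fun y => ⟨hΦpos _, hΦlt1 _⟩
  have hucmem : ∀ u : ℝ, u ∈ Set.Ioo (0:ℝ) 1 → ∀ c : ℝ, c ∈ Set.Ioo (0:ℝ) 1 →
      u * c ∈ Set.Ioo (0:ℝ) 1 := by
    rintro u ⟨hu0, hu1⟩ c ⟨hc0, hc1⟩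
    exact ⟨by positivity, by nlinarith⟩
  have key : ∀ u : ℝ, u ∈ Set.Ioo (0:ℝ) 1 → ∀ (y : Fin d → ℝ) (t : ℝ),
      (Φinv (u * Φ (Γ y)) ≤ t ↔ u * Φ (Γ y) ≤ Φ t) := by
    intro u hu y t
    have h1 : Φ (Φinv (u * Φ (Γ y))) = u * Φ (Γ y) := hΦinv _ (hucmem u hu _ (hcmem y))
    constructor
    · intro h
      rw [← h1]
      exact hΦmono.monotone h
    · intro h
      rw [← h1] at h
      exact hΦmono.le_iff_le.mp h
  -- measurable replacement for the (possibly non-measurable) `Φinv`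
  set B : ℝ × (Fin d → ℝ) → ℝ :=
    fun p => if p.1 ∈ Set.Ioo (0:ℝ) 1 then Φinv (p.1 * Φ (Γ p.2)) else 0 with hB
  have hBmeas : Measurable B := by
    apply measurable_of_Iic
    intro t
    have hset : B ⁻¹' Set.Iic t =
        ({p : ℝ × (Fin d → ℝ) | p.1 ∈ Set.Ioo (0:ℝ) 1} ∩ {p | p.1 * Φ (Γ p.2) ≤ Φ t})
        ∪ ({p : ℝ × (Fin d → ℝ) | p.1 ∈ Set.Ioo (0:ℝ) 1}ᶜ ∩ {_p | (0:ℝ) ≤ t}) := by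
      ext p
      by_cases hp : p.1 ∈ Set.Ioo (0:ℝ) 1
      · have hBp : B p = Φinv (p.1 * Φ (Γ p.2)) := by simp only [hB]; exact if_pos hp
        constructor
        · intro hpt
          rw [Set.mem_preimage, Set.mem_Iic, hBp, key p.1 hp p.2 t] at hpt
          exact Or.inl ⟨hp, hpt⟩
        · rintro (⟨_, h⟩ | ⟨hp', _⟩)
          · rw [Set.mem_preimage, Set.mem_Iic, hBp, key p.1 hp p.2 t]
            exact h
          · exact absurd hp hp'
      · have hBp : B p = 0 := by simp only [hB]; exact if_neg hp
        constructor
        · intro hpt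
          rw [Set.mem_preimage, Set.mem_Iic, hBp] at hpt
          exact Or.inr ⟨hp, hpt⟩
        · rintro (⟨hp', _⟩ | ⟨_, h⟩)
          · exact absurd hp' hp
          · rw [Set.mem_preimage, Set.mem_Iic, hBp]
            exact h
    rw [hset]
    have h1 : MeasurableSet {p : ℝ × (Fin d → ℝ) | p.1 ∈ Set.Ioo (0:ℝ) 1} :=
      measurable_fst measurableSet_Ioo
    have h2 : MeasurableSet {p : ℝ × (Fin d → ℝ) | p.1 * Φ (Γ p.2) ≤ Φ t} :=
      measurableSet_le (measurable_fst.mul ((hΦmeas.comp hΓ).comp measurable_snd))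
        measurable_const
    exact (h1.inter h2).union (h1.compl.inter (MeasurableSet.const _))
  set gt : ℝ × (Fin d → ℝ) → ℝ := fun p => Φ (Γ p.2) * max (f (B p, p.2)) 0 with hgt
  have hgtmeas : Measurable gt :=
    ((hΦmeas.comp hΓ).comp measurable_snd).mul
      ((hf.comp (hBmeas.prodMk measurable_snd)).max measurable_const)
  have hgtnn : ∀ p, 0 ≤ gt p := fun p => mul_nonneg (hΦpos _).le (le_max_right _ _)
  have hgmeas : Measurable g := by
    have : g = fun p => if p.1 < Γ p.2 then max (f p) 0 else 0 := funext hg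
    rw [this]
    exact Measurable.ite (measurableSet_lt measurable_fst (hΓ.comp measurable_snd))
      (hf.max measurable_const) measurable_const
  have hgnn : ∀ p, 0 ≤ g p := by
    intro p
    rw [hg p]
    split
    · exact le_max_right _ _
    · exact le_rfl
  -- a.e. equality of ghat and gt
  have hae1 : ∀ᵐ p ∂(ν.prod μ), p.1 ∈ Set.Ioo (0:ℝ) 1 := by
    rw [hν, Measure.restrict_prod_eq_prod_univ]
    exact (ae_restrict_mem (measurableSet_Ioo.prod MeasurableSet.univ)).mono
      (fun p hp => hp.1)
  have haeg : ghat =ᵐ[ν.prod μ] gt := by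
    filter_upwards [hae1] with p hp
    rw [hghat p, hgt]
    simp only [hB, hp, if_pos]
  -- the pushforward identity
  have hmap : ∀ y : Fin d → ℝ, Measure.map (fun u : ℝ => B (u, y)) ν
      = (ENNReal.ofReal (Φ (Γ y)))⁻¹ • ((gaussianReal 0 1).restrict (Set.Iio (Γ y))) := by
    intro y
    have hc0 : 0 < Φ (Γ y) := hΦpos _
    have hcne : ENNReal.ofReal (Φ (Γ y)) ≠ 0 := (ENNReal.ofReal_pos.mpr hc0).ne'
    have hcnetop : ENNReal.ofReal (Φ (Γ y)) ≠ ⊤ := ENNReal.ofReal_ne_top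
    have hBy : Measurable (fun u : ℝ => B (u, y)) :=
      hBmeas.comp (measurable_id.prodMk measurable_const)
    haveI : IsFiniteMeasure (Measure.map (fun u : ℝ => B (u, y)) ν) :=
      Measure.isFiniteMeasure_map _ _
    haveI : IsFiniteMeasure
        ((ENNReal.ofReal (Φ (Γ y)))⁻¹ • ((gaussianReal 0 1).restrict (Set.Iio (Γ y)))) := by
      constructor
      rw [Measure.smul_apply, smul_eq_mul]
      exact ENNReal.mul_lt_top (ENNReal.inv_lt_top.mpr (ENNReal.ofReal_pos.mpr hc0))
        (measure_lt_top _ _)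
    apply MeasureTheory.Measure.ext_of_Iic
    intro t
    rw [Measure.map_apply hBy measurableSet_Iic, hν, Measure.restrict_apply (hBy measurableSet_Iic)]
    have hsetEq : ((fun u : ℝ => B (u, y)) ⁻¹' Set.Iic t) ∩ Set.Ioo (0:ℝ) 1
        = Set.Iic (Φ t / Φ (Γ y)) ∩ Set.Ioo (0:ℝ) 1 := by
      ext u
      simp only [Set.mem_inter_iff, Set.mem_preimage, Set.mem_Iic]
      constructor
      · rintro ⟨h1, hu⟩
        refine ⟨?_, hu⟩
        rw [hB] at h1
        simp only [hu, if_pos] at h1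
        rw [key u hu y t] at h1
        exact (le_div_iff₀ hc0).mpr h1
      · rintro ⟨h1, hu⟩
        refine ⟨?_, hu⟩
        rw [hB]
        simp only [hu, if_pos]
        rw [key u hu y t]
        exact (le_div_iff₀ hc0).mp h1
    rw [hsetEq, Measure.smul_apply, smul_eq_mul,
      Measure.restrict_apply measurableSet_Iic]
    rcases lt_or_ge t (Γ y) with ht | ht
    · have h1 : Set.Iic t ∩ Set.Iio (Γ y) = Set.Iic t :=
        Set.inter_eq_left.mpr (fun x hx => lt_of_le_of_lt hx ht)
      have hs1 : Φ t / Φ (Γ y) < 1 := (div_lt_one hc0).mpr (hΦmono ht)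
      have hs0 : 0 < Φ t / Φ (Γ y) := div_pos (hΦpos _) hc0
      have h2 : Set.Iic (Φ t / Φ (Γ y)) ∩ Set.Ioo (0:ℝ) 1 = Set.Ioc 0 (Φ t / Φ (Γ y)) := by
        ext u
        simp only [Set.mem_inter_iff, Set.mem_Iic, Set.mem_Ioo, Set.mem_Ioc]
        constructor
        · rintro ⟨h3, h4, h5⟩; exact ⟨h4, h3⟩
        · rintro ⟨h3, h4⟩; exact ⟨h4, h3, lt_of_le_of_lt h4 hs1⟩
      rw [h1, h2, Real.volume_Ioc, ← Phi_ofReal hΦ t, sub_zero,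
        ENNReal.ofReal_div_of_pos hc0, ENNReal.div_eq_inv_mul]
    · have h1 : Set.Iic t ∩ Set.Iio (Γ y) = Set.Iio (Γ y) :=
        Set.inter_eq_right.mpr (fun x hx => le_trans (le_of_lt hx) ht)
      have hs1 : (1:ℝ) ≤ Φ t / Φ (Γ y) := (one_le_div hc0).mpr (hΦmono.monotone ht)
      have h2 : Set.Iic (Φ t / Φ (Γ y)) ∩ Set.Ioo (0:ℝ) 1 = Set.Ioo (0:ℝ) 1 :=
        Set.inter_eq_right.mpr (fun u hu => le_trans hu.2.le hs1)
      rw [h1, h2, Real.volume_Ioo, gauss_Iio_eq_Iic, ← Phi_ofReal hΦ (Γ y), sub_zero,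
        ENNReal.ofReal_one, ENNReal.inv_mul_cancel hcne hcnetop]
  -- fiberwise change of variables
  have hfiber : ∀ (y : Fin d → ℝ) (h : ℝ → ℝ≥0∞), Measurable h →
      ∫⁻ u, h (B (u, y)) ∂ν
        = (ENNReal.ofReal (Φ (Γ y)))⁻¹ * ∫⁻ z in Set.Iio (Γ y), h z ∂(gaussianReal 0 1) := by
    intro y h hh
    have hBy : Measurable fun u : ℝ => B (u, y) :=
      hBmeas.comp (measurable_id.prodMk measurable_const)
    rw [← lintegral_map hh hBy, hmap y, lintegral_smul_measure, smul_eq_mul]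
  have hc0 : ∀ y : Fin d → ℝ, 0 < Φ (Γ y) := fun y => hΦpos _
  have hcne : ∀ y : Fin d → ℝ, ENNReal.ofReal (Φ (Γ y)) ≠ 0 :=
    fun y => (ENNReal.ofReal_pos.mpr (hc0 y)).ne'
  have hcnetop : ∀ _y : Fin d → ℝ, ENNReal.ofReal (Φ (Γ _y)) ≠ ⊤ := fun _ => ENNReal.ofReal_ne_top
  have hm1 : ∀ y : Fin d → ℝ, Measurable fun z : ℝ => ENNReal.ofReal (max (f (z, y)) 0) :=
    fun y =>
      ((hf.comp (measurable_id.prodMk measurable_const)).max measurable_const).ennreal_ofReal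
  have hm2 : ∀ y : Fin d → ℝ, Measurable fun z : ℝ => ENNReal.ofReal (max (f (z, y)) 0 ^ 2) :=
    fun y =>
      (((hf.comp (measurable_id.prodMk measurable_const)).max
        measurable_const).pow_const 2).ennreal_ofReal
  have hgfib1 : ∀ y : Fin d → ℝ,
      (∫⁻ z in Set.Iio (Γ y), ENNReal.ofReal (max (f (z, y)) 0) ∂(gaussianReal 0 1))
        = ∫⁻ z, ENNReal.ofReal (g (z, y)) ∂(gaussianReal 0 1) := by
    intro y
    rw [← lintegral_indicator measurableSet_Iio]
    apply lintegral_congr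
    intro z
    rw [hg (z, y)]
    by_cases hz : z < Γ y
    · simp [Set.indicator, hz]
    · simp [Set.indicator, hz]
  have hgfib2 : ∀ y : Fin d → ℝ,
      (∫⁻ z in Set.Iio (Γ y), ENNReal.ofReal (max (f (z, y)) 0 ^ 2) ∂(gaussianReal 0 1))
        = ∫⁻ z, ENNReal.ofReal (g (z, y) ^ 2) ∂(gaussianReal 0 1) := by
    intro y
    rw [← lintegral_indicator measurableSet_Iio]
    apply lintegral_congr
    intro z
    rw [hg (z, y)]
    by_cases hz : z < Γ y
    · simp [Set.indicator, hz]
    · simp [Set.indicator, hz]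
  have hBfib : ∀ (y : Fin d → ℝ) (u : ℝ), gt (u, y) = Φ (Γ y) * max (f (B (u, y), y)) 0 :=
    fun y u => rfl
  have hfib1 : ∀ y : Fin d → ℝ, (∫⁻ u, ENNReal.ofReal (gt (u, y)) ∂ν)
      = ∫⁻ z, ENNReal.ofReal (g (z, y)) ∂(gaussianReal 0 1) := by
    intro y
    have heq : ∀ u : ℝ, ENNReal.ofReal (gt (u, y))
        = ENNReal.ofReal (Φ (Γ y)) * ENNReal.ofReal (max (f (B (u, y), y)) 0) := by
      intro u
      rw [hBfib y u, ENNReal.ofReal_mul (hc0 y).le]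
    simp_rw [heq]
    rw [lintegral_const_mul' _ _ (hcnetop y), hfiber y _ (hm1 y), ← mul_assoc,
      ENNReal.mul_inv_cancel (hcne y) (hcnetop y), one_mul, hgfib1 y]
  have hfib2 : ∀ y : Fin d → ℝ, (∫⁻ u, ENNReal.ofReal (gt (u, y) ^ 2) ∂ν)
      = ENNReal.ofReal (Φ (Γ y)) * ∫⁻ z, ENNReal.ofReal (g (z, y) ^ 2) ∂(gaussianReal 0 1) := by
    intro y
    have heq : ∀ u : ℝ, ENNReal.ofReal (gt (u, y) ^ 2)
        = ENNReal.ofReal (Φ (Γ y))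
          * (ENNReal.ofReal (Φ (Γ y)) * ENNReal.ofReal (max (f (B (u, y), y)) 0 ^ 2)) := by
      intro u
      rw [hBfib y u, mul_pow, sq (Φ (Γ y)), mul_assoc, ENNReal.ofReal_mul (hc0 y).le,
        ENNReal.ofReal_mul (hc0 y).le]
    simp_rw [heq]
    rw [lintegral_const_mul' _ _ (hcnetop y), lintegral_const_mul' _ _ (hcnetop y),
      hfiber y _ (hm2 y), ← hgfib2 y]
    congr 1
    rw [← mul_assoc, ENNReal.mul_inv_cancel (hcne y) (hcnetop y), one_mul]
  -- assemble over the product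
  have hprod_gt1 : ∫⁻ p, ENNReal.ofReal (gt p) ∂(ν.prod μ)
      = ∫⁻ y, ∫⁻ u, ENNReal.ofReal (gt (u, y)) ∂ν ∂μ :=
    lintegral_prod_symm _ hgtmeas.ennreal_ofReal.aemeasurable
  have hprod_gt2 : ∫⁻ p, ENNReal.ofReal (gt p ^ 2) ∂(ν.prod μ)
      = ∫⁻ y, ∫⁻ u, ENNReal.ofReal (gt (u, y) ^ 2) ∂ν ∂μ :=
    lintegral_prod_symm _ (hgtmeas.pow_const 2).ennreal_ofReal.aemeasurable
  have hprod_g1 : ∫⁻ p, ENNReal.ofReal (g p) ∂((gaussianReal 0 1).prod μ)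
      = ∫⁻ y, ∫⁻ z, ENNReal.ofReal (g (z, y)) ∂(gaussianReal 0 1) ∂μ :=
    lintegral_prod_symm _ hgmeas.ennreal_ofReal.aemeasurable
  have hprod_g2 : ∫⁻ p, ENNReal.ofReal (g p ^ 2) ∂((gaussianReal 0 1).prod μ)
      = ∫⁻ y, ∫⁻ z, ENNReal.ofReal (g (z, y) ^ 2) ∂(gaussianReal 0 1) ∂μ :=
    lintegral_prod_symm _ (hgmeas.pow_const 2).ennreal_ofReal.aemeasurable
  have hL1 : ∫⁻ p, ENNReal.ofReal (gt p) ∂(ν.prod μ)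
      = ∫⁻ p, ENNReal.ofReal (g p) ∂((gaussianReal 0 1).prod μ) := by
    rw [hprod_gt1, hprod_g1]
    exact lintegral_congr fun y => hfib1 y
  have hL2 : ∫⁻ p, ENNReal.ofReal (gt p ^ 2) ∂(ν.prod μ)
      ≤ ∫⁻ p, ENNReal.ofReal (g p ^ 2) ∂((gaussianReal 0 1).prod μ) := by
    rw [hprod_gt2, hprod_g2]
    refine lintegral_mono fun y => ?_
    rw [hfib2 y]
    calc ENNReal.ofReal (Φ (Γ y)) * ∫⁻ z, ENNReal.ofReal (g (z, y) ^ 2) ∂(gaussianReal 0 1)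
        ≤ 1 * ∫⁻ z, ENNReal.ofReal (g (z, y) ^ 2) ∂(gaussianReal 0 1) :=
          mul_le_mul_left (ENNReal.ofReal_le_one.mpr (hΦlt1 _).le) _
      _ = _ := one_mul _
  have hL2fin : ∫⁻ p, ENNReal.ofReal (g p ^ 2) ∂((gaussianReal 0 1).prod μ) ≠ ⊤ :=
    ((hasFiniteIntegral_iff_ofReal
      (Filter.Eventually.of_forall fun p => sq_nonneg (g p))).mp hint2.2).ne
  have hL2hatlt : ∫⁻ p, ENNReal.ofReal (gt p ^ 2) ∂(ν.prod μ) < ⊤ :=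
    lt_of_le_of_lt hL2 hL2fin.lt_top
  have haesm2 : AEStronglyMeasurable (fun p => ghat p ^ 2) (ν.prod μ) :=
    ((hgtmeas.pow_const 2).aestronglyMeasurable).congr
      (by filter_upwards [haeg] with p hp; rw [hp])
  have hghat_ae : (fun p => ENNReal.ofReal (ghat p ^ 2))
      =ᵐ[ν.prod μ] fun p => ENNReal.ofReal (gt p ^ 2) := by
    filter_upwards [haeg] with p hp
    rw [hp]
  have haint : Integrable (fun p => ghat p ^ 2) (ν.prod μ) := by
    refine ⟨haesm2, ?_⟩
    rw [hasFiniteIntegral_iff_ofReal (Filter.Eventually.of_forall fun p => sq_nonneg _),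
      lintegral_congr_ae hghat_ae]
    exact hL2hatlt
  have haesm1 : AEStronglyMeasurable ghat (ν.prod μ) :=
    hgtmeas.aestronglyMeasurable.congr haeg.symm
  have hBg2 : ∫ p, ghat p ^ 2 ∂(ν.prod μ)
      = (∫⁻ p, ENNReal.ofReal (gt p ^ 2) ∂(ν.prod μ)).toReal := by
    rw [integral_eq_lintegral_of_nonneg_ae
      (Filter.Eventually.of_forall fun p => sq_nonneg _) haesm2]
    congr 1
    exact lintegral_congr_ae hghat_ae
  have hBg1 : ∫ p, ghat p ∂(ν.prod μ)
      = (∫⁻ p, ENNReal.ofReal (gt p) ∂(ν.prod μ)).toReal := by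
    rw [integral_eq_lintegral_of_nonneg_ae
      (Filter.Eventually.of_forall fun p => by
        rw [hghat p]; exact mul_nonneg (hΦpos _).le (le_max_right _ _)) haesm1]
    congr 1
    apply lintegral_congr_ae
    filter_upwards [haeg] with p hp
    rw [hp]
  have hGg2 : ∫ p, g p ^ 2 ∂((gaussianReal 0 1).prod μ)
      = (∫⁻ p, ENNReal.ofReal (g p ^ 2) ∂((gaussianReal 0 1).prod μ)).toReal :=
    integral_eq_lintegral_of_nonneg_ae (Filter.Eventually.of_forall fun p => sq_nonneg _)
      (hgmeas.pow_const 2).aestronglyMeasurable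
  have hGg1 : ∫ p, g p ∂((gaussianReal 0 1).prod μ)
      = (∫⁻ p, ENNReal.ofReal (g p) ∂((gaussianReal 0 1).prod μ)).toReal :=
    integral_eq_lintegral_of_nonneg_ae (Filter.Eventually.of_forall hgnn)
      hgmeas.aestronglyMeasurable
  refine ⟨haint, ?_⟩
  rw [hBg2, hBg1, hGg2, hGg1, hL1]
  exact sub_le_sub (ENNReal.toReal_mono hL2fin hL2) le_rfl
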